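/- Let K[u] = c₀ ∂²u/∂x₁² + ∂/∂x₂((λ₂/(3b₀) u² + β₁u + β₀)∂u/∂x₂) + d₀ ∂u/∂x₁ + (λ₂u² + λ₁u + λ₀)∂u/∂x₂ + (b₀λ₁ − 2b₀²β₁)u² + k₁u with b₀ ≠ 0. Then for all real ν₁, ν₂: K[ν₁e^{−b₀x₂} + ν₂e^{−(a₁x₁ + b₀x₂)}] = (b₀²β₀ − λ₀b₀ + k₁)ν₁e^{−b₀x₂} + (k₁ + β₀b₀² − λ₀b₀ + c₀a₁² − a₁d₀)ν₂e^{−(a₁x₁ + b₀x₂)}, so span{e^{−b₀x₂}, e^{−(a₁x₁+b₀x₂)}} is invariant under K. -/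

import Mathlib

open Real

/-- the cubic operator K leaves `span{e^{−b₀x₂}, e^{−(a₁x₁+b₀x₂)}}`
invariant, acting diagonally with the stated eigenvalues. -/
theorem stmt4 (a₁ b₀ c₀ b0 b1 l0 l1 l2 d₀ k₁ : ℝ) (hb₀ : b₀ ≠ 0)
    (K : (ℝ → ℝ → ℝ) → ℝ → ℝ → ℝ)
    (hK : ∀ u : ℝ → ℝ → ℝ, ∀ x y : ℝ,
      K u x y =
        c₀ * deriv (fun x' => deriv (fun x'' => u x'' y) x') x +
        deriv (fun y' => (l2 / (3 * b₀) * (u x y') ^ 2 + b1 * u x y' + b0) *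
          deriv (fun y'' => u x y'') y') y +
        d₀ * deriv (fun x' => u x' y) x +
        (l2 * (u x y) ^ 2 + l1 * u x y + l0) * deriv (fun y' => u x y') y +
        (b₀ * l1 - 2 * b₀ ^ 2 * b1) * (u x y) ^ 2 + k₁ * u x y) :
    ∀ ν₁ ν₂ : ℝ, ∀ x y : ℝ,
      K (fun x₁ x₂ => ν₁ * exp (-b₀ * x₂) + ν₂ * exp (-(a₁ * x₁ + b₀ * x₂))) x y =
        (b₀ ^ 2 * b0 - l0 * b₀ + k₁) * ν₁ * exp (-b₀ * y) +
        (k₁ + b0 * b₀ ^ 2 - l0 * b₀ + c₀ * a₁ ^ 2 - a₁ * d₀) * ν₂ *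
          exp (-(a₁ * x + b₀ * y)) := by
  intro ν₁ ν₂ x y
  simp only [hK]
  -- derivatives in y (x fixed)
  have hv : ∀ x0 t : ℝ, HasDerivAt
      (fun s => ν₁ * exp (-b₀ * s) + ν₂ * exp (-(a₁ * x0 + b₀ * s)))
      (-b₀ * (ν₁ * exp (-b₀ * t) + ν₂ * exp (-(a₁ * x0 + b₀ * t)))) t := by
    intro x0 t
    have h1 : HasDerivAt (fun s : ℝ => -b₀ * s) (-b₀) t := by
      simpa using (hasDerivAt_id t).const_mul (-b₀)
    have h2 : HasDerivAt (fun s : ℝ => -(a₁ * x0 + b₀ * s)) (-b₀) t := by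
      have : HasDerivAt (fun s : ℝ => a₁ * x0 + b₀ * s) b₀ t := by
        simpa using ((hasDerivAt_id t).const_mul b₀).const_add (a₁ * x0)
      exact this.neg
    have := ((h1.exp.const_mul ν₁).add (h2.exp.const_mul ν₂))
    refine this.congr_deriv ?_
    ring
  -- derivatives in x (y fixed)
  have hx : ∀ y0 t : ℝ, HasDerivAt
      (fun s => ν₁ * exp (-b₀ * y0) + ν₂ * exp (-(a₁ * s + b₀ * y0)))
      (-a₁ * (ν₂ * exp (-(a₁ * t + b₀ * y0)))) t := by
    intro y0 t
    have h2 : HasDerivAt (fun s : ℝ => -(a₁ * s + b₀ * y0)) (-a₁) t := by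
      have : HasDerivAt (fun s : ℝ => a₁ * s + b₀ * y0) a₁ t := by
        simpa using ((hasDerivAt_id t).const_mul a₁).add_const (b₀ * y0)
      exact this.neg
    have := ((h2.exp.const_mul ν₂).const_add (ν₁ * exp (-b₀ * y0)))
    refine this.congr_deriv ?_
    ring
  have hdx : (fun x'' => ν₁ * exp (-b₀ * y) + ν₂ * exp (-(a₁ * x'' + b₀ * y))) = fun s => ν₁ * exp (-b₀ * y) + ν₂ * exp (-(a₁ * s + b₀ * y)) := rfl
  have hdx1 : deriv (fun x'' => ν₁ * exp (-b₀ * y) + ν₂ * exp (-(a₁ * x'' + b₀ * y)))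
      = fun t => -a₁ * (ν₂ * exp (-(a₁ * t + b₀ * y))) := funext fun t => (hx y t).deriv
  have hdx2 : deriv (fun t => -a₁ * (ν₂ * exp (-(a₁ * t + b₀ * y)))) x
      = -a₁ * (-a₁ * (ν₂ * exp (-(a₁ * x + b₀ * y)))) := by
    have h2 : HasDerivAt (fun s : ℝ => -(a₁ * s + b₀ * y)) (-a₁) x := by
      have : HasDerivAt (fun s : ℝ => a₁ * s + b₀ * y) a₁ x := by
        simpa using ((hasDerivAt_id x).const_mul a₁).add_const (b₀ * y)
      exact this.neg
    have := (h2.exp.const_mul ν₂).const_mul (-a₁)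
    have h3 : HasDerivAt (fun t => -a₁ * (ν₂ * exp (-(a₁ * t + b₀ * y))))
        (-a₁ * (-a₁ * (ν₂ * exp (-(a₁ * x + b₀ * y))))) x := by
      refine this.congr_deriv ?_; ring
    exact h3.deriv
  have hdy : deriv (fun y'' => ν₁ * exp (-b₀ * y'') + ν₂ * exp (-(a₁ * x + b₀ * y'')))
      = fun t => -b₀ * (ν₁ * exp (-b₀ * t) + ν₂ * exp (-(a₁ * x + b₀ * t))) :=
    funext fun t => (hv x t).deriv
  set V : ℝ → ℝ := fun t => ν₁ * exp (-b₀ * t) + ν₂ * exp (-(a₁ * x + b₀ * t)) with hV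
  -- middle term
  have hmid : deriv (fun y' => (l2 / (3 * b₀) * (V y') ^ 2 + b1 * V y' + b0) * (-b₀ * V y')) y
      = (l2 / (3 * b₀) * (2 * V y * (-b₀ * V y)) + b1 * (-b₀ * V y)) * (-b₀ * V y)
        + (l2 / (3 * b₀) * (V y) ^ 2 + b1 * V y + b0) * (-b₀ * (-b₀ * V y)) := by
    have hv' : HasDerivAt V (-b₀ * V y) y := hv x y
    have hP : HasDerivAt (fun s => l2 / (3 * b₀) * (V s) ^ 2 + b1 * V s + b0)
        (l2 / (3 * b₀) * (2 * V y * (-b₀ * V y)) + b1 * (-b₀ * V y)) y := by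
      have := (((hv'.pow 2).const_mul (l2 / (3 * b₀))).add (hv'.const_mul b1)).add_const b0
      refine this.congr_deriv ?_; simp only [Nat.cast_ofNat]; ring
    have hQ : HasDerivAt (fun s => -b₀ * V s) (-b₀ * (-b₀ * V y)) y := hv'.const_mul (-b₀)
    exact (hP.mul hQ).deriv
  rw [hdx1, hdx2, hdy, hmid]
  simp only [hV]
  field_simp
  ring
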